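/- arXiv:2504.12233 — 3 statements merged into one kernel-verified Lean document; each statement's English description precedes it below -/
import Mathlib

section
/- Let d ≥ 2, let Π be an orthogonal projection of rank r on ℂ^d, and let A, B be arbitrary d×d complex matrices. Then ∫ Tr(UΠUᴴ · A · UΠUᴴ · B) dμ_d(U) = [r(rd−1)·Tr(AB) + r(d−r)·Tr(A)·Tr(B)] / (d(d²−1)). -/
open Matrix MeasureTheory Kronecker

namespace HSM

variable {d : ℕ}

/-- The swap (flip) operator on `ℂ^d ⊗ ℂ^d` as a matrix. -/
noncomputable def F (d : ℕ) : Matrix (Fin d × Fin d) (Fin d × Fin d) ℂ :=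
  Matrix.of fun p q => if q = (p.2, p.1) then 1 else 0

lemma F_apply (p q : Fin d × Fin d) : F d p q = if q = (p.2, p.1) then 1 else 0 := rfl

lemma F_apply' (p q : Fin d × Fin d) : F d p q = if p = (q.2, q.1) then 1 else 0 := by
  rw [F_apply]
  congr 1
  simp only [Prod.ext_iff, eq_iff_iff]
  tauto

lemma F_mul_kron (A B : Matrix (Fin d) (Fin d) ℂ) :
    F d * (A ⊗ₖ B) = (B ⊗ₖ A) * F d := by
  ext p q
  rw [mul_apply, mul_apply]
  simp only [F_apply, kroneckerMap_apply]
  rw [Finset.sum_eq_single ((p.2, p.1) : Fin d × Fin d) ?_ (by simp),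
      Finset.sum_eq_single ((q.2, q.1) : Fin d × Fin d) ?_ (by simp)]
  · simp [mul_comm]
  · intro x _ hx
    have hq : q ≠ (x.2, x.1) := fun h => hx (by simp [h])
    simp [hq]
  · intro x _ hx
    simp [if_neg hx]

lemma trace_kron_F (A B : Matrix (Fin d) (Fin d) ℂ) :
    ((A ⊗ₖ B) * F d).trace = (A * B).trace := by
  have h : ∀ p : Fin d × Fin d, ((A ⊗ₖ B) * F d) p p = A p.1 p.2 * B p.2 p.1 := by
    intro p
    rw [mul_apply, Finset.sum_eq_single ((p.2, p.1) : Fin d × Fin d)]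
    · simp [F_apply]
    · intro x _ hx
      have hq : p ≠ (x.2, x.1) := fun h => hx (by simp [h])
      simp [F_apply, hq]
    · simp
  simp only [Matrix.trace, diag_apply, h, mul_apply]
  rw [Fintype.sum_prod_type]

lemma F_mul_F : F d * F d = 1 := by
  ext p q
  rw [mul_apply]
  rw [Finset.sum_eq_single ((p.2, p.1) : Fin d × Fin d) ?_ (by simp)]
  · simp [F_apply, Matrix.one_apply, Prod.ext_iff, and_comm, eq_comm]
  · intro x _ hx
    simp [F_apply, if_neg hx]

lemma trace_F : (F d).trace = (d : ℂ) := by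
  simp only [Matrix.trace, diag_apply, F_apply, Prod.ext_iff]
  rw [Fintype.sum_prod_type]
  simp [eq_comm]



variable {d : ℕ}

lemma diag_unitary (z : Fin d → ℂ) (hz : ∀ i, z i * star (z i) = 1) :
    Matrix.diagonal z ∈ Matrix.unitaryGroup (Fin d) ℂ := by
  refine Matrix.mem_unitaryGroup_iff.mpr ?_
  ext a b
  rw [Matrix.star_eq_conjTranspose, Matrix.diagonal_conjTranspose, Matrix.diagonal_mul_diagonal]
  rcases eq_or_ne a b with rfl | h
  · rw [Matrix.diagonal_apply_eq, Matrix.one_apply_eq]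
    simpa using hz a
  · rw [Matrix.diagonal_apply_ne _ h, Matrix.one_apply_ne h]

/-- permutation matrix -/
def Pm (σ : Equiv.Perm (Fin d)) : Matrix (Fin d) (Fin d) ℂ :=
  Matrix.of fun a b => if a = σ b then 1 else 0

lemma Pm_unitary (σ : Equiv.Perm (Fin d)) : Pm σ ∈ Matrix.unitaryGroup (Fin d) ℂ := by
  rw [Matrix.mem_unitaryGroup_iff]
  ext a b
  rw [mul_apply]
  rw [Finset.sum_eq_single (σ.symm a)]
  · have ha : σ (σ.symm a) = a := Equiv.apply_symm_apply σ a
    simp only [Pm, Matrix.star_eq_conjTranspose, Matrix.conjTranspose_apply, Matrix.of_apply, ha,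
      if_pos rfl, one_mul, Matrix.one_apply]
    rcases eq_or_ne b a with rfl | hb
    · simp
    · rw [if_neg hb, if_neg (fun h : a = b => hb h.symm)]
      simp
  · intro c _ hc
    have : a ≠ σ c := fun h => hc (by rw [h, Equiv.symm_apply_apply])
    simp [Pm, this]
  · simp

lemma perm_rel (M : Matrix (Fin d × Fin d) (Fin d × Fin d) ℂ)
    (hM : ∀ V ∈ Matrix.unitaryGroup (Fin d) ℂ, (V ⊗ₖ V) * M = M * (V ⊗ₖ V))
    (σ : Equiv.Perm (Fin d)) (i j k l : Fin d) :
    M (σ i, σ j) (σ k, σ l) = M (i, j) (k, l) := by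
  have h := hM (Pm σ) (Pm_unitary σ)
  have h2 := congrFun (congrFun h (σ i, σ j)) (k, l)
  rw [mul_apply, mul_apply] at h2
  rw [Finset.sum_eq_single ((i, j) : Fin d × Fin d) ?_ (by simp)] at h2
  · rw [Finset.sum_eq_single ((σ k, σ l) : Fin d × Fin d) ?_ (by simp)] at h2
    · simpa [Pm, kroneckerMap_apply] using h2.symm
    · intro c _ hc
      have : ¬(c.1 = σ k ∧ c.2 = σ l) := by
        rintro ⟨h1', h2'⟩; exact hc (Prod.ext h1' h2')
      simp only [Pm, kroneckerMap_apply, Matrix.of_apply]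
      rcases not_and_or.mp this with hh | hh
      · rw [if_neg hh]; ring
      · rw [if_neg hh]; ring
  · intro c _ hc
    have : ¬(σ i = σ c.1 ∧ σ j = σ c.2) := by
      rintro ⟨h1', h2'⟩
      exact hc (Prod.ext (σ.injective h1'.symm).symm (σ.injective h2'.symm).symm).symm
    simp only [Pm, kroneckerMap_apply, Matrix.of_apply]
    rcases not_and_or.mp this with hh | hh
    · rw [if_neg hh]; ring
    · rw [if_neg hh]; ring

lemma vanish (M : Matrix (Fin d × Fin d) (Fin d × Fin d) ℂ)
    (hM : ∀ V ∈ Matrix.unitaryGroup (Fin d) ℂ, (V ⊗ₖ V) * M = M * (V ⊗ₖ V))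
    {i j k l : Fin d} (h1 : ((i, j) : Fin d × Fin d) ≠ (k, l))
    (h2 : ((i, j) : Fin d × Fin d) ≠ (l, k)) :
    M (i, j) (k, l) = 0 := by
  by_contra h0
  have hph : ∀ p : Fin d,
      (if i = p then Complex.I else 1) * (if j = p then Complex.I else 1)
        = (if k = p then Complex.I else 1) * (if l = p then Complex.I else 1) := by
    intro p
    set z : Fin d → ℂ := fun m => if m = p then Complex.I else 1 with hzdef
    have hmem : Matrix.diagonal z ∈ Matrix.unitaryGroup (Fin d) ℂ := by
      apply diag_unitary
      intro m
      simp only [hzdef]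
      split_ifs <;> simp [Complex.ext_iff]
    have h := hM _ hmem
    rw [Matrix.diagonal_kronecker_diagonal] at h
    have h2' := congrFun (congrFun h (i, j)) (k, l)
    rw [Matrix.diagonal_mul, Matrix.mul_diagonal] at h2'
    have h3 : (z i * z j) * M (i, j) (k, l) = (z k * z l) * M (i, j) (k, l) := by
      rw [h2']; ring
    have h4 := mul_right_cancel₀ h0 h3
    simpa only [hzdef] using h4
  have hcount : ∀ p : Fin d,
      ((if i = p then 1 else 0) + (if j = p then 1 else 0) : ℤ)
        = (if k = p then 1 else 0) + (if l = p then 1 else 0) := by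
    intro p
    have h := hph p
    split_ifs at h ⊢ <;>
      first
        | omega
        | (exfalso; revert h; simp [Complex.ext_iff]; try norm_num)
  rcases eq_or_ne i k with rfl | hik
  · rcases eq_or_ne j l with rfl | hjl
    · exact h1 rfl
    · have hc := hcount j
      rw [if_pos rfl, if_neg (fun h : l = j => hjl h.symm)] at hc
      split_ifs at hc <;> omega
  · have hci := hcount i
    rw [if_pos rfl, if_neg (fun h : k = i => hik h.symm)] at hci
    have hli : l = i := by
      by_contra hli
      rw [if_neg hli] at hci
      split_ifs at hci <;> omega
    have hji : j ≠ i := by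
      intro h
      rw [if_pos h, if_pos hli] at hci
      omega
    have hcj := hcount j
    rw [if_neg (fun h => hji h.symm), if_pos rfl,
      if_neg (fun h : l = j => hji (h.symm.trans hli))] at hcj
    have hkj : k = j := by
      by_contra hkj
      rw [if_neg hkj] at hcj
      omega
    exact h2 (by rw [hli, hkj])

lemma exists_perm {i j k l : Fin d} (hij : i ≠ j) (hkl : k ≠ l) :
    ∃ σ : Equiv.Perm (Fin d), σ i = k ∧ σ j = l := by
  have h1 : Equiv.swap i k j ≠ k := by
    rcases eq_or_ne j k with rfl | hjk
    · rw [Equiv.swap_apply_right]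
      exact fun h => hij h
    · rw [Equiv.swap_apply_of_ne_of_ne hij.symm hjk]
      exact hjk
  refine ⟨(Equiv.swap i k).trans (Equiv.swap (Equiv.swap i k j) l), ?_, ?_⟩
  · simp only [Equiv.trans_apply, Equiv.swap_apply_left]
    exact Equiv.swap_apply_of_ne_of_ne (Ne.symm h1) hkl
  · simp only [Equiv.trans_apply]
    exact Equiv.swap_apply_left _ _



/-- A rational rotation mixing coordinates `i0` and `i1`. -/
noncomputable def rot (i0 i1 : Fin d) : Matrix (Fin d) (Fin d) ℂ :=
  Matrix.of fun a b =>
    if a = i0 then (if b = i0 then 3/5 else if b = i1 then -(4/5) else 0)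
    else if a = i1 then (if b = i0 then 4/5 else if b = i1 then 3/5 else 0)
    else if a = b then 1 else 0

section rotfacts

variable {i0 i1 : Fin d}

lemma rot00 : rot i0 i1 i0 i0 = 3/5 := by simp [rot]
lemma rot01 (hne : i0 ≠ i1) : rot i0 i1 i0 i1 = -(4/5) := by simp [rot, hne.symm]
lemma rot10 (hne : i0 ≠ i1) : rot i0 i1 i1 i0 = 4/5 := by simp [rot, hne.symm]
lemma rot11 (hne : i0 ≠ i1) : rot i0 i1 i1 i1 = 3/5 := by simp [rot, hne.symm]

lemma rot_out {a : Fin d} (ha0 : a ≠ i0) (ha1 : a ≠ i1) (c : Fin d) :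
    rot i0 i1 a c = if a = c then 1 else 0 := by
  simp [rot, ha0, ha1]

lemma rot_in_out (hne : i0 ≠ i1) {c : Fin d} (hc0 : c ≠ i0) (hc1 : c ≠ i1) :
    rot i0 i1 i0 c = 0 ∧ rot i0 i1 i1 c = 0 := by
  constructor <;> simp [rot, hne.symm, hc0, hc1]

lemma rot_unitary (hne : i0 ≠ i1) : rot i0 i1 ∈ Matrix.unitaryGroup (Fin d) ℂ := by
  have hstar : ∀ a b, star (rot i0 i1 a b) = rot i0 i1 a b := by
    intro a b
    simp only [rot, Matrix.of_apply]
    split_ifs <;> norm_num [RCLike.star_def]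
  refine Matrix.mem_unitaryGroup_iff.mpr ?_
  ext a b
  rw [mul_apply]
  simp only [Matrix.star_eq_conjTranspose, Matrix.conjTranspose_apply, hstar]
  by_cases ha : a = i0 ∨ a = i1
  · by_cases hb : b = i0 ∨ b = i1
    · -- both in {i0, i1} : reduce the sum to the two indices
      rw [← Finset.sum_subset (Finset.subset_univ ({i0, i1} : Finset (Fin d)))
        (fun c _ hc => ?_), Finset.sum_pair hne]
      · rcases ha with rfl | rfl <;> rcases hb with rfl | rfl
        · rw [rot00, rot01 hne, Matrix.one_apply_eq]; norm_num
        · rw [rot00, rot10 hne, rot01 hne, rot11 hne, Matrix.one_apply_ne hne]; norm_num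
        · rw [rot00, rot10 hne, rot01 hne, rot11 hne, Matrix.one_apply_ne hne.symm]; norm_num
        · rw [rot10 hne, rot11 hne, Matrix.one_apply_eq]; norm_num
      · simp only [Finset.mem_insert, Finset.mem_singleton, not_or] at hc
        rcases ha with rfl | rfl
        · rw [(rot_in_out hne hc.1 hc.2).1, zero_mul]
        · rw [(rot_in_out hne hc.1 hc.2).2, zero_mul]
    · -- a ∈ {i0,i1}, b outside
      push_neg at hb
      have h1 : ∀ c, rot i0 i1 a c * rot i0 i1 b c
          = rot i0 i1 a c * (if b = c then 1 else 0) := by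
        intro c; rw [rot_out hb.1 hb.2]
      simp only [h1, mul_ite, mul_one, mul_zero, Finset.sum_ite_eq, Finset.mem_univ, if_true]
      rcases ha with rfl | rfl
      · rw [(rot_in_out hne hb.1 hb.2).1, Matrix.one_apply_ne (Ne.symm hb.1)]
      · rw [(rot_in_out hne hb.1 hb.2).2, Matrix.one_apply_ne (Ne.symm hb.2)]
  · -- a outside
    push_neg at ha
    have h1 : ∀ c, rot i0 i1 a c * rot i0 i1 b c
        = if a = c then rot i0 i1 b c else 0 := by
      intro c; rw [rot_out ha.1 ha.2, ite_mul, one_mul, zero_mul]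
    simp only [h1, Finset.sum_ite_eq, Finset.mem_univ, if_true]
    by_cases hb0 : b = i0
    · subst hb0
      rw [(rot_in_out hne ha.1 ha.2).1, Matrix.one_apply_ne ha.1]
    · by_cases hb1 : b = i1
      · subst hb1
        rw [(rot_in_out hne ha.1 ha.2).2, Matrix.one_apply_ne ha.2]
      · rw [rot_out hb0 hb1, Matrix.one_apply]
        simp [eq_comm]

end rotfacts



/-- Elements of the commutant of `{V ⊗ V}` are linear combinations of `1` and the flip. -/
theorem commutant (hd : 2 ≤ d) (M : Matrix (Fin d × Fin d) (Fin d × Fin d) ℂ)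
    (hM : ∀ V ∈ Matrix.unitaryGroup (Fin d) ℂ, (V ⊗ₖ V) * M = M * (V ⊗ₖ V)) :
    ∃ a b : ℂ, M = a • 1 + b • F d := by
  have h0 : (0:ℕ) < d := by omega
  have h1' : (1:ℕ) < d := by omega
  set i0 : Fin d := ⟨0, h0⟩ with hi0
  set i1 : Fin d := ⟨1, h1'⟩ with hi1
  have hne : i0 ≠ i1 := by simp [hi0, hi1, Fin.ext_iff]
  set x := M (i0,i1) (i0,i1) with hxdef
  set y := M (i0,i1) (i1,i0) with hydef
  set w := M (i0,i0) (i0,i0) with hwdef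
  have hx : ∀ i j : Fin d, i ≠ j → M (i,j) (i,j) = x := by
    intro i j hij
    obtain ⟨σ, hσ1, hσ2⟩ := exists_perm hne hij
    rw [hxdef, ← hσ1, ← hσ2, perm_rel M hM σ]
  have hy : ∀ i j : Fin d, i ≠ j → M (i,j) (j,i) = y := by
    intro i j hij
    obtain ⟨σ, hσ1, hσ2⟩ := exists_perm hne hij
    rw [hydef, ← hσ1, ← hσ2, perm_rel M hM σ]
  have hw : ∀ i : Fin d, M (i,i) (i,i) = w := by
    intro i
    have hσ1 : Equiv.swap i0 i i0 = i := Equiv.swap_apply_left i0 i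
    rw [hwdef, ← hσ1, perm_rel M hM (Equiv.swap i0 i)]
  set c := w - x - y with hcdef
  set Dg : Matrix (Fin d × Fin d) (Fin d × Fin d) ℂ :=
    Matrix.of (fun p q => if p.1 = p.2 ∧ q = p then (1:ℂ) else 0) with hDg
  have hMeq : M = x • 1 + y • F d + c • Dg := by
    ext p q
    obtain ⟨i, j⟩ := p
    obtain ⟨k, l⟩ := q
    simp only [Matrix.add_apply, Matrix.smul_apply, Matrix.one_apply, F_apply, hDg,
      Matrix.of_apply, smul_eq_mul]
    by_cases hd1 : ((i,j) : Fin d × Fin d) = (k,l)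
    · by_cases hij : i = j
      · -- all four indices equal
        subst hij
        obtain ⟨rfl, rfl⟩ : i = k ∧ i = l := Prod.mk.injEq .. ▸ hd1
        rw [hw i]
        simp only [if_pos rfl, and_self, Prod.mk.injEq, if_true, mul_one]
        rw [hcdef]; ring
      · -- diagonal pair, i ≠ j
        rw [← hd1, hx i j hij, if_pos rfl,
          if_neg (fun h : ((i,j) : Fin d × Fin d) = (j,i) => hij (by
            obtain ⟨h1, h2⟩ := Prod.mk.injEq .. ▸ h
            exact h1)),
          if_neg (fun h : i = j ∧ ((i,j) : Fin d × Fin d) = (i,j) => hij h.1)]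
        ring
    · by_cases hd2 : ((k,l) : Fin d × Fin d) = (j,i)
      · -- the flipped pair
        have hij : i ≠ j := by
          intro h
          subst h
          exact hd1 hd2.symm
        rw [hd2, hy i j hij, if_neg (fun h : ((i,j) : Fin d × Fin d) = (j,i) => hd1 (h.trans hd2.symm)),
          if_pos rfl, if_neg (fun h : i = j ∧ ((j,i) : Fin d × Fin d) = (i,j) => hij h.1)]
        ring
      · -- generic vanishing entry
        have h2' : ((i,j) : Fin d × Fin d) ≠ (l,k) := by
          intro h
          obtain ⟨ha, hb⟩ := Prod.mk.injEq .. ▸ h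
          exact hd2 (by rw [ha, hb])
        rw [vanish M hM hd1 h2', if_neg (fun h => hd1 h),
          if_neg (fun h : ((k,l) : Fin d × Fin d) = (j,i) => hd2 h),
          if_neg (fun h : i = j ∧ ((k,l) : Fin d × Fin d) = (i,j) => hd1 (h.2.symm ▸ rfl))]
        ring
  -- now use the rotation to show c = 0
  have hc0 : c = 0 := by
    set V := rot i0 i1 with hV
    have hcomm := hM V (rot_unitary hne)
    rw [hMeq] at hcomm
    rw [mul_add, mul_add, add_mul, add_mul] at hcomm
    rw [mul_smul_comm, mul_one, smul_mul_assoc, one_mul] at hcomm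
    rw [mul_smul_comm, smul_mul_assoc, ← F_mul_kron] at hcomm
    rw [mul_smul_comm, smul_mul_assoc] at hcomm
    have hkey := add_left_cancel hcomm
    have hent := congrFun (congrFun hkey (i0,i0)) (i0,i1)
    simp only [Matrix.smul_apply, smul_eq_mul] at hent
    have hL : ((V ⊗ₖ V) * Dg) (i0,i0) (i0,i1) = 0 := by
      rw [mul_apply]
      apply Finset.sum_eq_zero
      intro z _
      have : Dg z (i0, i1) = 0 := by
        rw [hDg, Matrix.of_apply, if_neg]
        rintro ⟨hz1, hz2⟩
        rw [← hz2] at hz1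
        exact hne hz1
      rw [this, mul_zero]
    have hR : (Dg * (V ⊗ₖ V)) (i0,i0) (i0,i1) = V i0 i0 * V i0 i1 := by
      rw [mul_apply]
      rw [Finset.sum_eq_single ((i0,i0) : Fin d × Fin d)]
      · rw [hDg, Matrix.of_apply, if_pos ⟨rfl, rfl⟩, one_mul, kroneckerMap_apply]
      · intro z _ hz
        rw [hDg, Matrix.of_apply, if_neg (fun h => hz h.2), zero_mul]
      · simp
    rw [hL, hR, mul_zero, hV, rot00, rot01 hne] at hent
    have := hent.symm
    field_simp at this
    linear_combination (-1/12 : ℂ) * this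
  refine ⟨x, y, ?_⟩
  rw [hMeq, hc0, zero_smul, add_zero]


lemma trace_PAPB (P A B : Matrix (Fin d) (Fin d) ℂ) :
    (P * A * P * B).trace = ((P ⊗ₖ P) * ((A ⊗ₖ B) * F d)).trace := by
  have h1 : (P ⊗ₖ P) * ((A ⊗ₖ B) * F d) = ((P * A) ⊗ₖ (P * B)) * F d := by
    rw [← Matrix.mul_assoc, ← Matrix.mul_kronecker_mul]
  rw [h1, trace_kron_F, ← Matrix.mul_assoc]

lemma trace_idem (Proj : Matrix (Fin d) (Fin d) ℂ) (hproj : Proj * Proj = Proj) :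
    Proj.trace = (Proj.rank : ℂ) := by
  have hidem : Proj.mulVecLin ∘ₗ Proj.mulVecLin = Proj.mulVecLin := by
    rw [← Matrix.mulVecLin_mul, hproj]
  have hisp : LinearMap.IsProj (LinearMap.range Proj.mulVecLin) Proj.mulVecLin := by
    refine ⟨fun x => LinearMap.mem_range_self _ x, ?_⟩
    rintro x ⟨y, rfl⟩
    exact DFunLike.congr_fun hidem y
  have hlin : LinearMap.trace ℂ (Fin d → ℂ) Proj.mulVecLin = Proj.trace := by
    rw [LinearMap.trace_eq_matrix_trace ℂ (Pi.basisFun ℂ (Fin d)), LinearMap.toMatrix_eq_toMatrix']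
    have h2 : Proj.mulVecLin = Matrix.toLin' Proj :=
      LinearMap.ext fun v => by rw [Matrix.mulVecLin_apply, Matrix.toLin'_apply]
    rw [h2, LinearMap.toMatrix'_toLin']
  rw [← hlin, hisp.trace]
  rfl

end HSM

/-- **Second-moment Weingarten formula.**  For the Haar probability measure on `U(d)`, `d ≥ 2`,
a rank-`r` orthogonal projection `Proj` and arbitrary matrices `A, B`:
`∫ Tr(UProjUᴴ A UProjUᴴ B) dμ(U) = [r(rd−1)Tr(AB) + r(d−r)Tr(A)Tr(B)] / (d(d²−1))`. -/
theorem haar_second_moment_trace {d r : ℕ} (hd : 2 ≤ d)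
    [MeasurableSpace (Matrix.unitaryGroup (Fin d) ℂ)]
    [BorelSpace (Matrix.unitaryGroup (Fin d) ℂ)]
    (μ : Measure (Matrix.unitaryGroup (Fin d) ℂ))
    [μ.IsHaarMeasure] [IsProbabilityMeasure μ]
    (Proj : Matrix (Fin d) (Fin d) ℂ) (hproj : Proj * Proj = Proj) (hherm : Projᴴ = Proj) (hrank : Proj.rank = r)
    (A B : Matrix (Fin d) (Fin d) ℂ) :
    (∫ U : Matrix.unitaryGroup (Fin d) ℂ,
        ((U : Matrix (Fin d) (Fin d) ℂ) * Proj * (U : Matrix (Fin d) (Fin d) ℂ)ᴴ * A *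
          ((U : Matrix (Fin d) (Fin d) ℂ) * Proj * (U : Matrix (Fin d) (Fin d) ℂ)ᴴ) * B).trace ∂μ)
      = ((r : ℂ) * ((r : ℂ) * (d : ℂ) - 1) * (A * B).trace
          + (r : ℂ) * ((d : ℂ) - (r : ℂ)) * A.trace * B.trace)
        / ((d : ℂ) * ((d : ℂ) ^ 2 - 1)) := by
  classical
  set P : Matrix.unitaryGroup (Fin d) ℂ → Matrix (Fin d) (Fin d) ℂ :=
    fun U => (U : Matrix (Fin d) (Fin d) ℂ) * Proj * (U : Matrix (Fin d) (Fin d) ℂ)ᴴ with hPdef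
  have hUnit : ∀ U : Matrix.unitaryGroup (Fin d) ℂ,
      (U : Matrix (Fin d) (Fin d) ℂ)ᴴ * (U : Matrix (Fin d) (Fin d) ℂ) = 1 := by
    intro U
    have h := U.2.1
    rwa [Matrix.star_eq_conjTranspose] at h
  -- pointwise algebra
  have hP2 : ∀ U, P U * P U = P U := by
    intro U
    show ((U : Matrix (Fin d) (Fin d) ℂ) * Proj * (U : Matrix (Fin d) (Fin d) ℂ)ᴴ) *
        ((U : Matrix (Fin d) (Fin d) ℂ) * Proj * (U : Matrix (Fin d) (Fin d) ℂ)ᴴ)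
      = (U : Matrix (Fin d) (Fin d) ℂ) * Proj * (U : Matrix (Fin d) (Fin d) ℂ)ᴴ
    simp only [Matrix.mul_assoc]
    rw [show (U : Matrix (Fin d) (Fin d) ℂ)ᴴ *
        ((U : Matrix (Fin d) (Fin d) ℂ) * (Proj * (U : Matrix (Fin d) (Fin d) ℂ)ᴴ))
        = Proj * (U : Matrix (Fin d) (Fin d) ℂ)ᴴ from by
      rw [← Matrix.mul_assoc, hUnit U, Matrix.one_mul]]
    rw [show Proj * (Proj * (U : Matrix (Fin d) (Fin d) ℂ)ᴴ)
        = Proj * (U : Matrix (Fin d) (Fin d) ℂ)ᴴ from by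
      rw [← Matrix.mul_assoc, hproj]]
  have htrProj : Proj.trace = (r : ℂ) := by rw [HSM.trace_idem Proj hproj, hrank]
  have htrP : ∀ U, (P U).trace = (r : ℂ) := by
    intro U
    show ((U : Matrix (Fin d) (Fin d) ℂ) * Proj * (U : Matrix (Fin d) (Fin d) ℂ)ᴴ).trace = (r : ℂ)
    rw [Matrix.trace_mul_cycle, hUnit U, Matrix.one_mul, htrProj]
  -- continuity and integrability
  have hcoe : Continuous (fun U : Matrix.unitaryGroup (Fin d) ℂ => (U : Matrix (Fin d) (Fin d) ℂ)) :=
    continuous_subtype_val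
  have hPcont : Continuous P := ((hcoe.matrix_mul continuous_const).matrix_mul
    hcoe.matrix_conjTranspose)
  have hPbound : ∀ (U : Matrix.unitaryGroup (Fin d) ℂ) (i j : Fin d),
      ‖P U i j‖ ≤ ∑ b : Fin d, ∑ a : Fin d, ‖Proj a b‖ := by
    intro U i j
    have hexp : P U i j = ∑ b : Fin d, (∑ a : Fin d, (U : Matrix (Fin d) (Fin d) ℂ) i a * Proj a b)
        * star ((U : Matrix (Fin d) (Fin d) ℂ) j b) := by
      show ((U : Matrix (Fin d) (Fin d) ℂ) * Proj * (U : Matrix (Fin d) (Fin d) ℂ)ᴴ) i j = _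
      rw [Matrix.mul_apply]
      refine Finset.sum_congr rfl fun b _ => ?_
      rw [Matrix.mul_apply, Matrix.conjTranspose_apply]
    rw [hexp]
    refine (norm_sum_le _ _).trans (Finset.sum_le_sum fun b _ => ?_)
    rw [norm_mul, norm_star]
    have h2 : ‖(U : Matrix (Fin d) (Fin d) ℂ) j b‖ ≤ 1 := entry_norm_bound_of_unitary U.2 j b
    calc ‖∑ a : Fin d, (U : Matrix (Fin d) (Fin d) ℂ) i a * Proj a b‖ *
          ‖(U : Matrix (Fin d) (Fin d) ℂ) j b‖
        ≤ (∑ a : Fin d, ‖Proj a b‖) * 1 := by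
          apply mul_le_mul _ h2 (norm_nonneg _)
            (Finset.sum_nonneg fun a _ => norm_nonneg _)
          refine (norm_sum_le _ _).trans (Finset.sum_le_sum fun a _ => ?_)
          rw [norm_mul]
          calc ‖(U : Matrix (Fin d) (Fin d) ℂ) i a‖ * ‖Proj a b‖
              ≤ 1 * ‖Proj a b‖ :=
                mul_le_mul_of_nonneg_right (entry_norm_bound_of_unitary U.2 i a) (norm_nonneg _)
            _ = ‖Proj a b‖ := one_mul _
      _ = ∑ a : Fin d, ‖Proj a b‖ := mul_one _
  have hint : ∀ p q : Fin d × Fin d, Integrable (fun U => ((P U) ⊗ₖ (P U)) p q) μ := by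
    intro p q
    refine ⟨((hPcont.matrix_elem p.1 q.1).mul (hPcont.matrix_elem p.2 q.2)).aestronglyMeasurable, ?_⟩
    apply HasFiniteIntegral.of_bounded
      (C := (∑ b : Fin d, ∑ a : Fin d, ‖Proj a b‖) * (∑ b : Fin d, ∑ a : Fin d, ‖Proj a b‖))
    refine Filter.Eventually.of_forall fun U => ?_
    show ‖P U p.1 q.1 * P U p.2 q.2‖ ≤ _
    rw [norm_mul]
    exact mul_le_mul (hPbound U p.1 q.1) (hPbound U p.2 q.2) (norm_nonneg _)
      ((norm_nonneg _).trans (hPbound U p.1 q.1))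
  -- the second-moment operator
  set S : Matrix (Fin d × Fin d) (Fin d × Fin d) ℂ :=
    Matrix.of (fun p q => ∫ U, ((P U) ⊗ₖ (P U)) p q ∂μ) with hSdef
  have hTr : ∀ C : Matrix (Fin d × Fin d) (Fin d × Fin d) ℂ,
      (S * C).trace = ∫ U, (((P U) ⊗ₖ (P U)) * C).trace ∂μ := by
    intro C
    calc (S * C).trace
        = ∑ p : Fin d × Fin d, ∑ x : Fin d × Fin d,
            (∫ U, ((P U) ⊗ₖ (P U)) p x ∂μ) * C x p := by
          simp only [Matrix.trace, Matrix.diag_apply, Matrix.mul_apply, hSdef, Matrix.of_apply]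
      _ = ∑ p : Fin d × Fin d, ∑ x : Fin d × Fin d,
            ∫ U, ((P U) ⊗ₖ (P U)) p x * C x p ∂μ := by
          refine Finset.sum_congr rfl fun p _ => Finset.sum_congr rfl fun x _ => ?_
          exact (integral_mul_const _ _).symm
      _ = ∫ U, ∑ p : Fin d × Fin d, ∑ x : Fin d × Fin d,
            ((P U) ⊗ₖ (P U)) p x * C x p ∂μ := by
          rw [integral_finset_sum _ (fun p _ => integrable_finset_sum _
            (fun x _ => (hint p x).mul_const _))]
          refine Finset.sum_congr rfl fun p _ => ?_
          rw [integral_finset_sum _ (fun x _ => (hint p x).mul_const _)]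
      _ = ∫ U, (((P U) ⊗ₖ (P U)) * C).trace ∂μ := by
          congr 1
  have hScomm : ∀ V ∈ Matrix.unitaryGroup (Fin d) ℂ, (V ⊗ₖ V) * S = S * (V ⊗ₖ V) := by
    intro V hV
    set V' : Matrix.unitaryGroup (Fin d) ℂ := ⟨V, hV⟩ with hV'def
    have hVH : Vᴴ * V = 1 := hUnit V'
    have hconj : ∀ U, (V ⊗ₖ V) * ((P U) ⊗ₖ (P U))
        = ((P (V' * U)) ⊗ₖ (P (V' * U))) * (V ⊗ₖ V) := by
      intro U
      rw [← Matrix.mul_kronecker_mul, ← Matrix.mul_kronecker_mul]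
      have hkey : V * P U = P (V' * U) * V := by
        show V * ((U : Matrix (Fin d) (Fin d) ℂ) * Proj * (U : Matrix (Fin d) (Fin d) ℂ)ᴴ)
          = ((V' * U : Matrix.unitaryGroup (Fin d) ℂ) : Matrix (Fin d) (Fin d) ℂ) * Proj *
            ((V' * U : Matrix.unitaryGroup (Fin d) ℂ) : Matrix (Fin d) (Fin d) ℂ)ᴴ * V
        have hcoe2 : ((V' * U : Matrix.unitaryGroup (Fin d) ℂ) : Matrix (Fin d) (Fin d) ℂ)
            = V * (U : Matrix (Fin d) (Fin d) ℂ) := rfl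
        rw [hcoe2, Matrix.conjTranspose_mul]
        simp only [Matrix.mul_assoc]
        rw [show (U : Matrix (Fin d) (Fin d) ℂ)ᴴ * (Vᴴ * V)
            = (U : Matrix (Fin d) (Fin d) ℂ)ᴴ from by rw [hVH, Matrix.mul_one]]
      rw [hkey]
    ext p q
    rw [Matrix.mul_apply, Matrix.mul_apply]
    calc ∑ x : Fin d × Fin d, (V ⊗ₖ V) p x * S x q
        = ∑ x : Fin d × Fin d, ∫ U, (V ⊗ₖ V) p x * ((P U) ⊗ₖ (P U)) x q ∂μ := by
          refine Finset.sum_congr rfl fun x _ => ?_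
          exact (integral_const_mul _ _).symm
      _ = ∫ U, ∑ x : Fin d × Fin d, (V ⊗ₖ V) p x * ((P U) ⊗ₖ (P U)) x q ∂μ :=
          (integral_finset_sum _ fun x _ => (hint x q).const_mul _).symm
      _ = ∫ U, ((V ⊗ₖ V) * ((P U) ⊗ₖ (P U))) p q ∂μ := by
          simp only [Matrix.mul_apply]
      _ = ∫ U, (((P (V' * U)) ⊗ₖ (P (V' * U))) * (V ⊗ₖ V)) p q ∂μ := by
          simp only [hconj]
      _ = ∫ U, (((P U) ⊗ₖ (P U)) * (V ⊗ₖ V)) p q ∂μ :=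
          integral_mul_left_eq_self (μ := μ)
            (fun U => (((P U) ⊗ₖ (P U)) * (V ⊗ₖ V)) p q) V'
      _ = ∑ x : Fin d × Fin d, S p x * (V ⊗ₖ V) x q := by
          simp only [Matrix.mul_apply]
          rw [integral_finset_sum _ (fun x _ => (hint p x).mul_const _)]
          refine Finset.sum_congr rfl fun x _ => ?_
          exact integral_mul_const _ _
  obtain ⟨a, b, hSab⟩ := HSM.commutant hd S hScomm
  -- first moment equation
  have hcard : ((1 : Matrix (Fin d × Fin d) (Fin d × Fin d) ℂ)).trace = ((d : ℂ) * (d : ℂ)) := by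
    rw [Matrix.trace_one]
    simp [Fintype.card_prod]
  have hmom1 : a * ((d : ℂ) * (d : ℂ)) + b * (d : ℂ) = (r : ℂ) * (r : ℂ) := by
    have h1 := hTr 1
    rw [hSab] at h1
    rw [Matrix.mul_one, Matrix.trace_add, Matrix.trace_smul, Matrix.trace_smul, hcard,
      HSM.trace_F, smul_eq_mul, smul_eq_mul] at h1
    rw [h1]
    have : ∀ U : Matrix.unitaryGroup (Fin d) ℂ,
        (((P U) ⊗ₖ (P U)) * 1).trace = (r : ℂ) * (r : ℂ) := by
      intro U
      rw [Matrix.mul_one, Matrix.trace_kronecker, htrP]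
    simp only [this, integral_const, measure_univ, ENNReal.toReal_one, probReal_univ, one_smul]
  have hmom2 : a * (d : ℂ) + b * ((d : ℂ) * (d : ℂ)) = (r : ℂ) := by
    have h2 := hTr (HSM.F d)
    rw [hSab] at h2
    rw [Matrix.add_mul, Matrix.smul_mul, Matrix.smul_mul, Matrix.one_mul, HSM.F_mul_F,
      Matrix.trace_add, Matrix.trace_smul, Matrix.trace_smul, HSM.trace_F, hcard,
      smul_eq_mul, smul_eq_mul] at h2
    rw [h2]
    have : ∀ U : Matrix.unitaryGroup (Fin d) ℂ,
        (((P U) ⊗ₖ (P U)) * HSM.F d).trace = (r : ℂ) := by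
      intro U
      rw [HSM.trace_kron_F, hP2, htrP]
    simp only [this, integral_const, measure_univ, ENNReal.toReal_one, probReal_univ, one_smul]
  -- the main integral
  have hmain : (∫ U, ((P U) * A * (P U) * B).trace ∂μ)
      = a * (A * B).trace + b * (A.trace * B.trace) := by
    have h3 := hTr ((A ⊗ₖ B) * HSM.F d)
    have hpt : ∀ U : Matrix.unitaryGroup (Fin d) ℂ,
        (((P U) ⊗ₖ (P U)) * ((A ⊗ₖ B) * HSM.F d)).trace = ((P U) * A * (P U) * B).trace :=
      fun U => (HSM.trace_PAPB (P U) A B).symm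
    rw [hSab] at h3
    simp only [hpt] at h3
    rw [Matrix.add_mul, Matrix.smul_mul, Matrix.smul_mul, Matrix.one_mul,
      Matrix.trace_add, Matrix.trace_smul, Matrix.trace_smul,
      smul_eq_mul, smul_eq_mul, HSM.trace_kron_F] at h3
    have hFterm : (HSM.F d * ((A ⊗ₖ B) * HSM.F d)).trace = A.trace * B.trace := by
      rw [Matrix.trace_mul_comm, Matrix.mul_assoc, HSM.F_mul_F, Matrix.mul_one,
        Matrix.trace_kronecker]
    rw [hFterm] at h3
    exact h3.symm
  -- put everything together
  have hD : (d : ℂ) * ((d : ℂ) ^ 2 - 1) ≠ 0 := by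
    have hd0 : (d : ℂ) ≠ 0 := Nat.cast_ne_zero.mpr (by omega)
    have hd1 : (d : ℂ) ^ 2 - 1 ≠ 0 := by
      rw [sub_ne_zero]
      intro h
      have : ((d ^ 2 : ℕ) : ℂ) = ((1 : ℕ) : ℂ) := by push_cast; simpa using h
      have := Nat.cast_injective (R := ℂ) this
      nlinarith
    exact mul_ne_zero hd0 hd1
  calc (∫ U : Matrix.unitaryGroup (Fin d) ℂ,
        ((U : Matrix (Fin d) (Fin d) ℂ) * Proj * (U : Matrix (Fin d) (Fin d) ℂ)ᴴ * A *
          ((U : Matrix (Fin d) (Fin d) ℂ) * Proj * (U : Matrix (Fin d) (Fin d) ℂ)ᴴ) * B).trace ∂μ)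
      = ∫ U, ((P U) * A * (P U) * B).trace ∂μ := rfl
    _ = a * (A * B).trace + b * (A.trace * B.trace) := hmain
    _ = ((r : ℂ) * ((r : ℂ) * (d : ℂ) - 1) * (A * B).trace
          + (r : ℂ) * ((d : ℂ) - (r : ℂ)) * A.trace * B.trace)
        / ((d : ℂ) * ((d : ℂ) ^ 2 - 1)) := by
        rw [eq_div_iff hD]
        linear_combination ((A * B).trace * (d : ℂ) - A.trace * B.trace) * hmom1
          + (A.trace * B.trace * (d : ℂ) - (A * B).trace) * hmom2
end

section
/- Let r ≥ 1 be a natural number and let δ : Fin r → ℝ satisfy 1 + r·δ_i ≥ 0 for every i and ∑_i |δ_i| ≤ 1/2. Then ∑_{i} | √((1 + r·δ_i) / (∑_j (1 + r·δ_j))) − (1 + r·δ_i)/√r | ≤ 5·r·√(∑_i δ_i²). (Note that ∑_j (1 + r·δ_j) ≥ r/2 > 0 under the hypotheses, so the square root is well defined.) -/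
set_option maxHeartbeats 1000000

private lemma aux_le_of_sq_le_sq {a b : ℝ} (ha : 0 ≤ a) (hb : 0 ≤ b) (h : a ^ 2 ≤ b ^ 2) :
    a ≤ b := by nlinarith

/-- **Eigenvalue form of the trace-norm bound `‖√(σ/Tr σ) − √r·σ‖₁ ≤ O(r·√(∑ δ_i²))`.**
If `1 + r·δ_i ≥ 0` for all `i` and `∑ |δ_i| ≤ 1/2`, then
`∑_i |√((1 + r·δ_i)/∑_j (1 + r·δ_j)) − (1 + r·δ_i)/√r| ≤ 5·r·√(∑ δ_i²)`. -/
theorem sqrt_eigenvalue_perturbation_bound (r : ℕ) (hr : 1 ≤ r) (δ : Fin r → ℝ)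
    (hpos : ∀ i, 0 ≤ 1 + (r : ℝ) * δ i)
    (hsum : ∑ i, |δ i| ≤ 1 / 2) :
    ∑ i, |Real.sqrt ((1 + (r : ℝ) * δ i) / (∑ j, (1 + (r : ℝ) * δ j)))
          - (1 + (r : ℝ) * δ i) / Real.sqrt r|
      ≤ 5 * (r : ℝ) * Real.sqrt (∑ i, (δ i) ^ 2) := by
  have hr' : (1:ℝ) ≤ (r:ℝ) := by exact_mod_cast hr
  have hrpos : (0:ℝ) < (r:ℝ) := by linarith
  set a : Fin r → ℝ := fun i => 1 + (r : ℝ) * δ i with ha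
  set S : ℝ := ∑ j, a j with hS
  set t : ℝ := Real.sqrt r with ht
  set T : ℝ := Real.sqrt (∑ i, (δ i) ^ 2) with hT
  have htpos : 0 < t := Real.sqrt_pos.mpr hrpos
  have ht2 : t ^ 2 = (r:ℝ) := Real.sq_sqrt hrpos.le
  have hTnn : 0 ≤ T := Real.sqrt_nonneg _
  have hT2 : T ^ 2 = ∑ i, (δ i) ^ 2 := Real.sq_sqrt (by positivity)
  have hDabs : |∑ i, δ i| ≤ 1/2 := (Finset.abs_sum_le_sum_abs _ _).trans hsum
  have hSval : S = (r:ℝ) + (r:ℝ) * ∑ i, δ i := by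
    simp [hS, ha, Finset.sum_add_distrib, Finset.mul_sum]
  have hD := abs_le.mp hDabs
  have hSlb : (r:ℝ)/2 ≤ S := by rw [hSval]; nlinarith [hD.1]
  have hSub : S ≤ 2*(r:ℝ) := by rw [hSval]; nlinarith [hD.2]
  have hSpos : 0 < S := by linarith
  set s : ℝ := Real.sqrt S with hs
  have hspos : 0 < s := Real.sqrt_pos.mpr hSpos
  have hs2 : s ^ 2 = S := Real.sq_sqrt hSpos.le
  -- Cauchy–Schwarz consequences
  have hCS1 : ∑ i, |δ i| ≤ t * T := by
    refine aux_le_of_sq_le_sq (Finset.sum_nonneg fun i _ => abs_nonneg _) (by positivity) ?_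
    have := Finset.sum_mul_sq_le_sq_mul_sq Finset.univ (fun _ : Fin r => (1:ℝ)) (fun i => |δ i|)
    simp only [one_mul, one_pow, Finset.sum_const, Finset.card_univ, Fintype.card_fin,
      nsmul_eq_mul, mul_one, sq_abs] at this
    calc (∑ i, |δ i|) ^ 2 ≤ (r:ℝ) * ∑ i, (δ i) ^ 2 := this
      _ = (t * T) ^ 2 := by rw [mul_pow, ht2, hT2]
  have hA : ∑ i, Real.sqrt (a i) ≤ t * s := by
    refine aux_le_of_sq_le_sq (Finset.sum_nonneg fun i _ => Real.sqrt_nonneg _) (by positivity) ?_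
    have := Finset.sum_mul_sq_le_sq_mul_sq Finset.univ (fun _ : Fin r => (1:ℝ))
      (fun i => Real.sqrt (a i))
    simp only [one_mul, one_pow, Finset.sum_const, Finset.card_univ, Fintype.card_fin,
      nsmul_eq_mul, mul_one] at this
    calc (∑ i, Real.sqrt (a i)) ^ 2 ≤ (r:ℝ) * ∑ i, Real.sqrt (a i) ^ 2 := this
      _ = (r:ℝ) * S := by
          rw [hS]; congr 1; exact Finset.sum_congr rfl fun i _ => Real.sq_sqrt (hpos i)
      _ = (t * s) ^ 2 := by rw [mul_pow, ht2, hs2]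
  have hB : ∑ i, Real.sqrt (a i) * |δ i| ≤ s * T := by
    refine aux_le_of_sq_le_sq
      (Finset.sum_nonneg fun i _ => mul_nonneg (Real.sqrt_nonneg _) (abs_nonneg _))
      (by positivity) ?_
    have := Finset.sum_mul_sq_le_sq_mul_sq Finset.univ (fun i => Real.sqrt (a i))
      (fun i => |δ i|)
    simp only [sq_abs] at this
    calc (∑ i, Real.sqrt (a i) * |δ i|) ^ 2
        ≤ (∑ i, Real.sqrt (a i) ^ 2) * ∑ i, (δ i) ^ 2 := this
      _ = S * ∑ i, (δ i) ^ 2 := by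
          congr 1; rw [hS]; exact Finset.sum_congr rfl fun i _ => Real.sq_sqrt (hpos i)
      _ = (s * T) ^ 2 := by rw [mul_pow, hs2, hT2]
  -- |t - s| ≤ r * T
  have hts : |t - s| ≤ (r:ℝ) * T := by
    have hfac : |t - s| * (t + s) = |(r:ℝ) - S| := by
      rw [← abs_of_pos (show (0:ℝ) < t + s by linarith), ← abs_mul]
      congr 1; nlinarith [ht2, hs2]
    have hDabs' : |∑ i, δ i| ≤ ∑ i, |δ i| := Finset.abs_sum_le_sum_abs _ _
    have hrS : |(r:ℝ) - S| ≤ (r:ℝ) * (t * T) := by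
      rw [hSval]
      have : (r:ℝ) - ((r:ℝ) + (r:ℝ) * ∑ i, δ i) = -((r:ℝ) * ∑ i, δ i) := by ring
      rw [this, abs_neg, abs_mul, abs_of_pos hrpos]
      exact mul_le_mul_of_nonneg_left (hDabs'.trans hCS1) hrpos.le
    have h1 : |t - s| * t ≤ (r:ℝ) * T * t := by
      have : |t - s| * t ≤ |t - s| * (t + s) :=
        mul_le_mul_of_nonneg_left (by linarith) (abs_nonneg _)
      calc |t - s| * t ≤ |(r:ℝ) - S| := by rw [← hfac]; exact this
        _ ≤ (r:ℝ) * (t * T) := hrS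
        _ = (r:ℝ) * T * t := by ring
    exact le_of_mul_le_mul_right h1 htpos
  have hs2t : s ≤ 2 * t := by
    refine aux_le_of_sq_le_sq hspos.le (by positivity) ?_
    rw [hs2, mul_pow, ht2]; nlinarith
  -- pointwise bound
  have key : ∀ i, |Real.sqrt (a i / S) - a i / t|
      ≤ Real.sqrt (a i) * (|t - s| / (s * t)) + Real.sqrt (a i) * |δ i| * ((r:ℝ) / t) := by
    intro i
    have hai : 0 ≤ a i := hpos i
    have hsqa : Real.sqrt (a i) ^ 2 = a i := Real.sq_sqrt hai
    have hsqann : 0 ≤ Real.sqrt (a i) := Real.sqrt_nonneg _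
    rw [Real.sqrt_div hai, ← hs]
    have decomp : Real.sqrt (a i) / s - a i / t
        = Real.sqrt (a i) * (t - s) / (s * t) + (Real.sqrt (a i) - a i) / t := by
      field_simp
      ring
    rw [decomp]
    calc |Real.sqrt (a i) * (t - s) / (s * t) + (Real.sqrt (a i) - a i) / t|
        ≤ |Real.sqrt (a i) * (t - s) / (s * t)| + |(Real.sqrt (a i) - a i) / t| := abs_add_le _ _
      _ = Real.sqrt (a i) * (|t - s| / (s * t)) + |Real.sqrt (a i) - a i| / t := by
          rw [abs_div, abs_div, abs_mul, abs_of_nonneg hsqann,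
            abs_of_pos (mul_pos hspos htpos), abs_of_pos htpos, mul_div_assoc]
      _ ≤ Real.sqrt (a i) * (|t - s| / (s * t)) + Real.sqrt (a i) * |δ i| * ((r:ℝ) / t) := by
          have h1 : |Real.sqrt (a i) - a i| ≤ Real.sqrt (a i) * ((r:ℝ) * |δ i|) := by
            have e1 : Real.sqrt (a i) - a i = Real.sqrt (a i) * (1 - Real.sqrt (a i)) := by
              rw [mul_sub, mul_one, ← sq, hsqa]
            rw [e1, abs_mul, abs_of_nonneg hsqann]
            refine mul_le_mul_of_nonneg_left ?_ hsqann
            have e2 : |1 - a i| = |1 - Real.sqrt (a i)| * (1 + Real.sqrt (a i)) := by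
              rw [← abs_of_nonneg (show (0:ℝ) ≤ 1 + Real.sqrt (a i) by linarith), ← abs_mul]
              congr 1; nlinarith [hsqa]
            have e3 : |1 - a i| = (r:ℝ) * |δ i| := by
              have : 1 - a i = -((r:ℝ) * δ i) := by simp [ha]
              rw [this, abs_neg, abs_mul, abs_of_pos hrpos]
            nlinarith [abs_nonneg (1 - Real.sqrt (a i))]
          have h1' : |Real.sqrt (a i) - a i| / t ≤ Real.sqrt (a i) * ((r:ℝ) * |δ i|) / t := by
            gcongr
          have h1'' : Real.sqrt (a i) * ((r:ℝ) * |δ i|) / t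
              = Real.sqrt (a i) * |δ i| * ((r:ℝ) / t) := by ring
          rw [h1''] at h1'
          linarith
  -- sum up
  have goal_eq : ∑ i, |Real.sqrt ((1 + (r : ℝ) * δ i) / (∑ j, (1 + (r : ℝ) * δ j)))
          - (1 + (r : ℝ) * δ i) / Real.sqrt r|
      = ∑ i, |Real.sqrt (a i / S) - a i / t| := rfl
  rw [goal_eq]
  calc ∑ i, |Real.sqrt (a i / S) - a i / t|
      ≤ ∑ i, (Real.sqrt (a i) * (|t - s| / (s * t)) + Real.sqrt (a i) * |δ i| * ((r:ℝ) / t)) :=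
        Finset.sum_le_sum fun i _ => key i
    _ = (∑ i, Real.sqrt (a i)) * (|t - s| / (s * t))
        + (∑ i, Real.sqrt (a i) * |δ i|) * ((r:ℝ) / t) := by
        rw [Finset.sum_add_distrib, ← Finset.sum_mul, ← Finset.sum_mul]
    _ ≤ (t * s) * (|t - s| / (s * t)) + (s * T) * ((r:ℝ) / t) := by
        have c1 : 0 ≤ |t - s| / (s * t) := by positivity
        have c2 : 0 ≤ (r:ℝ) / t := by positivity
        have := mul_le_mul_of_nonneg_right hA c1
        have := mul_le_mul_of_nonneg_right hB c2
        linarith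
    _ = |t - s| + s * (r:ℝ) * T / t := by field_simp
    _ ≤ (r:ℝ) * T + (2 * t) * (r:ℝ) * T / t := by
        gcongr
    _ = 3 * (r:ℝ) * T := by field_simp; ring
    _ ≤ 5 * (r:ℝ) * T := by nlinarith
end

section
/- Fix natural numbers N ≥ 2 and 1 ≤ Q ≤ N−1, and distinct indices i ≠ j in Fin N. On the Hilbert space ℂ^{2^N} with standard basis indexed by functions x : Fin N → {0,1}, let P_Q be the diagonal matrix with (P_Q)_{x,x} = 1 if the Hamming weight #{l : x(l) = 1} equals Q and 0 otherwise, and let A be the matrix with A_{y,x} = 1 if x(i) = 0, x(j) = 1, and y agrees with x except that y(i) = 1 and y(j) = 0, and A_{y,x} = 0 otherwise. Then Tr(P_Q · A · P_Q · Aᴴ) = binom(N−2, Q−1), and consequently (1/binom(N,Q)) · Tr(P_Q A P_Q Aᴴ) = Q(N−Q)/(N(N−1)). -/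
open Matrix

/-- The projection `P_Q` onto the charge-`Q` sector: the diagonal matrix selecting the
computational basis states `x : Fin N → Fin 2` of Hamming weight `Q`. -/
def chargeProj (N Q : ℕ) : Matrix (Fin N → Fin 2) (Fin N → Fin 2) ℂ :=
  Matrix.of fun x y =>
    if x = y ∧ (Finset.univ.filter fun l => x l = 1).card = Q then 1 else 0

/-- The operator `A = S_i⁺ S_j⁻`: its entry `A_{y,x}` equals `1` iff `x i = 0`, `x j = 1`, and
`y` agrees with `x` except that `y i = 1` and `y j = 0`. -/
def raiseLower (N : ℕ) (i j : Fin N) : Matrix (Fin N → Fin 2) (Fin N → Fin 2) ℂ :=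
  Matrix.of fun y x =>
    if x i = 0 ∧ x j = 1 ∧ y = Function.update (Function.update x i 1) j 0 then 1 else 0

/-- Hamming weight of a bitstring. -/
private def wt {N : ℕ} (x : Fin N → Fin 2) : ℕ :=
  (Finset.univ.filter fun l => x l = 1).card

private lemma mul_chargeProj {N Q : ℕ} (M : Matrix (Fin N → Fin 2) (Fin N → Fin 2) ℂ)
    (x z : Fin N → Fin 2) :
    (M * chargeProj N Q) x z = if wt z = Q then M x z else 0 := by
  simp only [mul_apply, chargeProj, of_apply, mul_ite, mul_one, mul_zero, ite_and]
  rw [show (fun y => if y = z then if (Finset.univ.filter fun l => y l = 1).card = Q then M x y else 0 else 0)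
      = fun y => if y = z then (if wt z = Q then M x y else 0) else 0 from ?_]
  · rw [Finset.sum_ite_eq' Finset.univ z]
    simp
  · funext y
    by_cases h : y = z <;> simp [h, wt]

private lemma chargeProj_mul {N Q : ℕ} (M : Matrix (Fin N → Fin 2) (Fin N → Fin 2) ℂ)
    (x z : Fin N → Fin 2) :
    (chargeProj N Q * M) x z = if wt x = Q then M x z else 0 := by
  simp only [mul_apply, chargeProj, of_apply, ite_mul, one_mul, zero_mul, ite_and]
  simp only [wt]
  rw [Finset.sum_ite_eq Finset.univ x (fun y => if (Finset.univ.filter fun l => x l = 1).card = Q then M y z else 0)]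
  simp
  congr

private lemma wt_swap {N : ℕ} {i j : Fin N} (hij : i ≠ j) {z : Fin N → Fin 2}
    (hzi : z i = 0) (hzj : z j = 1) :
    wt (Function.update (Function.update z i 1) j 0) = wt z := by
  have hiS : i ∉ (Finset.univ.filter fun l => z l = 1) := by simp [hzi]
  have hjS : j ∈ (Finset.univ.filter fun l => z l = 1) := by simp [hzj]
  have hset : (Finset.univ.filter fun l => Function.update (Function.update z i 1) j 0 l = 1)
      = insert i ((Finset.univ.filter fun l => z l = 1).erase j) := by
    ext l
    simp only [Finset.mem_filter, Finset.mem_univ, true_and, Finset.mem_insert, Finset.mem_erase]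
    by_cases hlj : l = j
    · subst hlj
      simp [Function.update_self, hij.symm, (by decide : (0 : Fin 2) ≠ 1)]
    · rw [Function.update_of_ne hlj]
      by_cases hli : l = i
      · subst hli; simp [Function.update_self, hlj]
      · rw [Function.update_of_ne hli]
        simp [hli, hlj]
  have hpos : 1 ≤ (Finset.univ.filter fun l => z l = 1).card :=
    Finset.card_pos.mpr ⟨j, hjS⟩
  simp only [wt, hset]
  rw [Finset.card_insert_of_notMem (fun h => hiS (Finset.mem_of_mem_erase h)),
    Finset.card_erase_of_mem hjS]
  omega

private lemma count_lemma {N Q : ℕ} (hQ1 : 1 ≤ Q) {i j : Fin N} (hij : i ≠ j) :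
    (Finset.univ.filter fun z : Fin N → Fin 2 => z i = 0 ∧ z j = 1 ∧ wt z = Q).card
      = (N - 2).choose (Q - 1) := by
  have hcard : ((Finset.univ.erase i).erase j).card = N - 2 := by
    rw [Finset.card_erase_of_mem (Finset.mem_erase.mpr ⟨Ne.symm hij, Finset.mem_univ j⟩),
      Finset.card_erase_of_mem (Finset.mem_univ i), Finset.card_univ, Fintype.card_fin]
    omega
  rw [show (N-2).choose (Q-1) = (((Finset.univ.erase i).erase j).powersetCard (Q-1)).card from by
    rw [Finset.card_powersetCard, hcard]]
  apply Finset.card_nbij' (fun z => (Finset.univ.filter fun l => z l = 1).erase j)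
    (fun T => fun l => if l = j ∨ l ∈ T then 1 else 0)
  · intro z hz
    simp only [Finset.mem_coe, Finset.mem_filter, Finset.mem_univ, true_and] at hz
    obtain ⟨hzi, hzj, hw⟩ := hz
    rw [Finset.mem_coe, Finset.mem_powersetCard]
    constructor
    · intro l hl
      simp only [Finset.mem_erase, Finset.mem_filter, Finset.mem_univ, true_and] at hl
      simp only [Finset.mem_erase, Finset.mem_univ, and_true]
      refine ⟨hl.1, ?_⟩
      rintro rfl
      rw [hzi] at hl
      exact absurd hl.2 (by decide)
    · rw [Finset.card_erase_of_mem (by simp [hzj])]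
      simp only [wt] at hw
      omega
  · intro T hT
    rw [Finset.mem_coe, Finset.mem_powersetCard] at hT
    obtain ⟨hsub, hTcard⟩ := hT
    have hiT : i ∉ T := fun h => by
      have := hsub h; simp [Finset.mem_erase] at this
    have hjT : j ∉ T := fun h => by
      have := hsub h; simp [Finset.mem_erase] at this
    simp only [Finset.mem_coe, Finset.mem_filter, Finset.mem_univ, true_and]
    refine ⟨by simp [hij, hiT], by simp, ?_⟩
    have : (Finset.univ.filter fun l => (if l = j ∨ l ∈ T then (1:Fin 2) else 0) = 1)
        = insert j T := by
      ext l
      simp only [Finset.mem_filter, Finset.mem_univ, true_and, Finset.mem_insert]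
      by_cases h : l = j ∨ l ∈ T <;> simp [h]
    simp only [wt, this, Finset.card_insert_of_notMem hjT, hTcard]
    omega
  · intro z hz
    simp only [Finset.mem_coe, Finset.mem_filter, Finset.mem_univ, true_and] at hz
    obtain ⟨hzi, hzj, hw⟩ := hz
    funext l
    by_cases hlj : l = j
    · subst hlj; simp [hzj]
    · simp only [Finset.mem_erase, Finset.mem_filter, Finset.mem_univ, true_and, hlj,
        false_or, not_false_iff, true_and]
      rcases (by omega : z l = 0 ∨ z l = 1) with h | h
      · simp [h, (by decide : ¬ (0:Fin 2) = 1)]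
      · simp [h, hlj]
  · intro T hT
    rw [Finset.mem_coe, Finset.mem_powersetCard] at hT
    have hjT : j ∉ T := fun h => by
      have := hT.1 h; simp [Finset.mem_erase] at this
    ext l
    simp only [Finset.mem_erase, Finset.mem_filter, Finset.mem_univ, true_and]
    by_cases hlj : l = j
    · subst hlj; simp [hjT]
    · by_cases hlT : l ∈ T <;> simp [hlj, hlT]

private lemma trace_eq {N Q : ℕ} (hQ1 : 1 ≤ Q) {i j : Fin N} (hij : i ≠ j) :
    (chargeProj N Q * raiseLower N i j * chargeProj N Q * (raiseLower N i j)ᴴ).trace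
      = ((N - 2).choose (Q - 1) : ℂ) := by
  classical
  have hA : ∀ x z : Fin N → Fin 2,
      (chargeProj N Q * raiseLower N i j * chargeProj N Q) x z * (raiseLower N i j)ᴴ z x
      = if x = Function.update (Function.update z i 1) j 0 ∧ (z i = 0 ∧ z j = 1 ∧ wt z = Q)
        then 1 else 0 := by
    intro x z
    rw [mul_chargeProj, chargeProj_mul, conjTranspose_apply]
    by_cases hC : z i = 0 ∧ z j = 1 ∧ x = Function.update (Function.update z i 1) j 0
    · obtain ⟨h1, h2, h3⟩ := hC
      subst h3
      rw [wt_swap hij h1 h2]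
      simp only [raiseLower, of_apply, h1, h2, and_self, if_true, true_and]
      by_cases hw : wt z = Q <;> simp [hw, h1, h2]
    · have hA0 : raiseLower N i j x z = 0 := by
        simp only [raiseLower, of_apply, if_neg hC]
      rw [hA0]
      simp only [star_zero, mul_zero]
      rw [if_neg]
      rintro ⟨h3, h1, h2, -⟩
      exact hC ⟨h1, h2, h3⟩
  unfold Matrix.trace
  simp only [diag_apply, mul_apply]
  calc (∑ x : Fin N → Fin 2, ∑ z : Fin N → Fin 2,
        (chargeProj N Q * raiseLower N i j * chargeProj N Q) x z * (raiseLower N i j)ᴴ z x)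
      = ∑ z : Fin N → Fin 2, ∑ x : Fin N → Fin 2,
        if x = Function.update (Function.update z i 1) j 0 ∧ (z i = 0 ∧ z j = 1 ∧ wt z = Q)
        then (1:ℂ) else 0 := by
        rw [Finset.sum_comm]
        exact Finset.sum_congr rfl fun z _ => Finset.sum_congr rfl fun x _ => hA x z
    _ = ∑ z : Fin N → Fin 2, if z i = 0 ∧ z j = 1 ∧ wt z = Q then (1:ℂ) else 0 := by
        refine Finset.sum_congr rfl fun z _ => ?_
        simp only [ite_and]
        rw [Finset.sum_ite_eq' Finset.univ]
        simp
    _ = ((N - 2).choose (Q - 1) : ℂ) := by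
        rw [Finset.sum_boole, count_lemma hQ1 hij]

private lemma choose_identity {N Q : ℕ} (hN : 2 ≤ N) (hQ1 : 1 ≤ Q) (hQ2 : Q ≤ N - 1) :
    Q * (N - Q) * N.choose Q = N * (N - 1) * (N - 2).choose (Q - 1) := by
  obtain ⟨m, rfl⟩ : ∃ m, N = m + 2 := ⟨N - 2, by omega⟩
  obtain ⟨q, rfl⟩ : ∃ q, Q = q + 1 := ⟨Q - 1, by omega⟩
  have hqm : q ≤ m := by omega
  have h1 := Nat.add_one_mul_choose_eq (m + 1) q
  have h2 := Nat.choose_mul_succ_eq m q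
  have hsub : m + 2 - (q + 1) = m + 1 - q := by omega
  have hsub2 : m + 2 - 1 = m + 1 := by omega
  have hsub3 : m + 2 - 2 = m := by omega
  have hsub4 : q + 1 - 1 = q := by omega
  rw [hsub, hsub2, hsub3, hsub4]
  calc (q + 1) * (m + 1 - q) * (m + 2).choose (q + 1)
      = (m + 1 - q) * ((m + 2).choose (q + 1) * (q + 1)) := by ring
    _ = (m + 1 - q) * ((m + 2) * (m + 1).choose q) := by
        rw [show (m+2).choose (q+1) * (q+1) = (m+2) * (m+1).choose q from h1.symm]
    _ = (m + 2) * ((m + 1).choose q * (m + 1 - q)) := by ring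
    _ = (m + 2) * (m.choose q * (m + 1)) := by rw [← h2]
    _ = (m + 2) * (m + 1) * m.choose q := by ring

/-- **Rényi-1 correlator of the maximally mixed charge-sector state.**  For `N ≥ 2`,
`1 ≤ Q ≤ N−1`, and distinct sites `i ≠ j`,
`Tr(P_Q A P_Q Aᴴ) = binom(N−2, Q−1)`, hence
`(1/binom(N,Q))·Tr(P_Q A P_Q Aᴴ) = Q(N−Q)/(N(N−1))`. -/
theorem renyi_one_correlator_charge_sector {N Q : ℕ} (hN : 2 ≤ N) (hQ1 : 1 ≤ Q)
    (hQ2 : Q ≤ N - 1) (i j : Fin N) (hij : i ≠ j) :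
    (chargeProj N Q * raiseLower N i j * chargeProj N Q * (raiseLower N i j)ᴴ).trace
        = ((N - 2).choose (Q - 1) : ℂ)
    ∧ ((N.choose Q : ℂ))⁻¹ *
        (chargeProj N Q * raiseLower N i j * chargeProj N Q * (raiseLower N i j)ᴴ).trace
        = ((Q : ℂ) * ((N : ℂ) - (Q : ℂ))) / ((N : ℂ) * ((N : ℂ) - 1)) := by
  have htr := trace_eq (Q := Q) hQ1 hij
  refine ⟨htr, ?_⟩
  rw [htr]
  have hQN : Q ≤ N := by omega
  have key := choose_identity hN hQ1 hQ2
  have keyC : (Q : ℂ) * ((N : ℂ) - (Q : ℂ)) * (N.choose Q : ℂ)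
      = (N : ℂ) * ((N : ℂ) - 1) * ((N - 2).choose (Q - 1) : ℂ) := by
    have h := congrArg (Nat.cast : ℕ → ℂ) key
    push_cast [Nat.cast_sub hQN, Nat.cast_sub (by omega : 1 ≤ N)] at h
    exact h
  have h1 : (N.choose Q : ℂ) ≠ 0 := Nat.cast_ne_zero.mpr (Nat.choose_pos hQN).ne'
  have h2 : (N : ℂ) ≠ 0 := Nat.cast_ne_zero.mpr (by omega)
  have h3 : (N : ℂ) - 1 ≠ 0 := by
    intro h
    rw [sub_eq_zero] at h
    have : N = 1 := by exact_mod_cast h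
    omega
  field_simp
  linear_combination -keyC
end
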